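/- Let ρ be a 2×2 complex positive semidefinite matrix with trace 1. Define the set of classical pure states C = {e₀e₀†, e₁e₁†} ∪ {v_φ v_φ† : φ ∈ ℝ}, where e₀, e₁ is the standard basis of ℂ² and v_φ = (e₀ + e^{iφ}e₁)/√2. Then ρ belongs to the convex hull (over ℝ) of C if and only if |ρ_{01}| ≤ min(ρ_{00}, ρ_{11}), i.e., the modulus of the off-diagonal entry is at most the smaller diagonal entry. -/

import Mathlib

open scoped ComplexConjugate ComplexOrder

private lemma tlq_exp_conj (φ : ℝ) :
    Complex.exp (↑φ * Complex.I) * conj (Complex.exp (↑φ * Complex.I)) = 1 := by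
  rw [Complex.mul_conj, Complex.normSq_eq_norm_sq, Complex.norm_exp_ofReal_mul_I]
  norm_num

/-- A qubit density matrix is a convex mixture of the classical states
"false" `|0⟩⟨0|`, "true" `|1⟩⟨1|` and the "undecidable" balanced
superpositions `(|0⟩ + e^{iφ}|1⟩)/√2` if and only if the modulus of its
off-diagonal entry is at most the smaller diagonal entry. -/
theorem ternary_logic_qubit_classical_iff
    (ρ : Matrix (Fin 2) (Fin 2) ℂ) (hpsd : ρ.PosSemidef) (htr : ρ.trace = 1)
    (e₀ e₁ : Fin 2 → ℂ) (he₀ : e₀ = ![1, 0]) (he₁ : e₁ = ![0, 1])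
    (v : ℝ → Fin 2 → ℂ)
    (hv : ∀ φ : ℝ, v φ = fun k =>
      (e₀ k + Complex.exp (φ * Complex.I) * e₁ k) / Real.sqrt 2)
    (C : Set (Matrix (Fin 2) (Fin 2) ℂ))
    (hC : C = {M | M = Matrix.of fun i j => e₀ i * conj (e₀ j)} ∪
              {M | M = Matrix.of fun i j => e₁ i * conj (e₁ j)} ∪
              {M | ∃ φ : ℝ, M = Matrix.of fun i j => v φ i * conj (v φ j)}) :
    ρ ∈ convexHull ℝ C ↔
      ‖ρ 0 1‖ ≤ min (ρ 0 0).re (ρ 1 1).re := by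
  have hs2 : (Real.sqrt 2 : ℂ) * (Real.sqrt 2 : ℂ) = 2 := by
    norm_cast
    rw [Real.mul_self_sqrt] <;> norm_num
  -- entry products of the balanced-superposition projectors
  have hv0 : ∀ φ : ℝ, v φ 0 = 1 / Real.sqrt 2 := by
    intro φ; rw [hv]; simp [he₀, he₁]
  have hv1 : ∀ φ : ℝ, v φ 1 = Complex.exp (↑φ * Complex.I) / Real.sqrt 2 := by
    intro φ; rw [hv]; simp [he₀, he₁]
  have c00 : ∀ φ : ℝ, v φ 0 * conj (v φ 0) = 1 / 2 := by
    intro φ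
    rw [hv0, map_div₀, map_one, Complex.conj_ofReal, div_mul_div_comm, one_mul, hs2]
  have c11 : ∀ φ : ℝ, v φ 1 * conj (v φ 1) = 1 / 2 := by
    intro φ
    rw [hv1, map_div₀, Complex.conj_ofReal, div_mul_div_comm, tlq_exp_conj, hs2]
  have c01 : ∀ φ : ℝ, v φ 0 * conj (v φ 1) =
      conj (Complex.exp (↑φ * Complex.I)) / 2 := by
    intro φ
    rw [hv0, hv1, map_div₀, Complex.conj_ofReal, div_mul_div_comm, one_mul, hs2]
  have c10 : ∀ φ : ℝ, v φ 1 * conj (v φ 0) = Complex.exp (↑φ * Complex.I) / 2 := by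
    intro φ
    rw [hv0, hv1, map_div₀, map_one, Complex.conj_ofReal, div_mul_div_comm, mul_one, hs2]
  constructor
  · -- forward direction: convex hull ⊆ the set S
    intro hmem
    set S : Set (Matrix (Fin 2) (Fin 2) ℂ) :=
      {M | ‖M 0 1‖ ≤ min (M 0 0).re (M 1 1).re} with hSdef
    have hconv : Convex ℝ S := by
      intro M hM N hN a b ha hb hab
      simp only [hSdef, Set.mem_setOf_eq] at hM hN ⊢
      have e01 : (a • M + b • N) 0 1 = (a : ℂ) * M 0 1 + (b : ℂ) * N 0 1 := by
        simp [Matrix.add_apply, Matrix.smul_apply, Complex.real_smul]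
      have e00 : ((a • M + b • N) 0 0).re = a * (M 0 0).re + b * (N 0 0).re := by
        simp [Matrix.add_apply, Matrix.smul_apply, Complex.real_smul,
          Complex.add_re, Complex.mul_re]
      have e11 : ((a • M + b • N) 1 1).re = a * (M 1 1).re + b * (N 1 1).re := by
        simp [Matrix.add_apply, Matrix.smul_apply, Complex.real_smul,
          Complex.add_re, Complex.mul_re]
      rw [e01, e00, e11]
      have h1 : ‖(a : ℂ) * M 0 1 + (b : ℂ) * N 0 1‖
          ≤ a * ‖M 0 1‖ + b * ‖N 0 1‖ := by
        refine (norm_add_le _ _).trans ?_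
        simp [norm_mul, Complex.norm_real, Real.norm_eq_abs, abs_of_nonneg ha, abs_of_nonneg hb]
      refine le_min (h1.trans ?_) (h1.trans ?_)
      · exact add_le_add
          (mul_le_mul_of_nonneg_left (hM.trans (min_le_left _ _)) ha)
          (mul_le_mul_of_nonneg_left (hN.trans (min_le_left _ _)) hb)
      · exact add_le_add
          (mul_le_mul_of_nonneg_left (hM.trans (min_le_right _ _)) ha)
          (mul_le_mul_of_nonneg_left (hN.trans (min_le_right _ _)) hb)
    have hsub : C ⊆ S := by
      intro M hM
      rw [hC] at hM
      rcases hM with (hM | hM) | hM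
      · simp only [Set.mem_setOf_eq] at hM
        subst hM
        simp [hSdef, he₀]
      · simp only [Set.mem_setOf_eq] at hM
        subst hM
        simp [hSdef, he₁]
      · obtain ⟨φ, hM⟩ := hM
        subst hM
        simp only [hSdef, Set.mem_setOf_eq, Matrix.of_apply, c00 φ, c11 φ, c01 φ]
        rw [norm_div, Complex.norm_conj, Complex.norm_exp_ofReal_mul_I]
        norm_num
    exact convexHull_min hsub hconv hmem
  · -- backward direction
    intro hineq
    have hH := hpsd.1
    have h00star : star (ρ 0 0) = ρ 0 0 := hH.apply 0 0
    have h11star : star (ρ 1 1) = ρ 1 1 := hH.apply 1 1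
    have h10 : ρ 1 0 = conj (ρ 0 1) := by
      have := hH.apply 1 0
      rw [← this]; simp
    set p : ℝ := (ρ 0 0).re with hp
    set q : ℝ := (ρ 1 1).re with hq
    set r : ℝ := ‖ρ 0 1‖ with hr
    have h00 : ρ 0 0 = (p : ℂ) := by
      have him : (ρ 0 0).im = 0 := Complex.conj_eq_iff_im.mp h00star
      exact Complex.ext rfl (by simp [him])
    have h11 : ρ 1 1 = (q : ℂ) := by
      have him : (ρ 1 1).im = 0 := Complex.conj_eq_iff_im.mp h11star
      exact Complex.ext rfl (by simp [him])
    have hpq : p + q = 1 := by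
      have h := htr
      rw [Matrix.trace_fin_two, h00, h11] at h
      exact_mod_cast congrArg Complex.re h
    have hrp : r ≤ p := hineq.trans (min_le_left _ _)
    have hrq : r ≤ q := hineq.trans (min_le_right _ _)
    have hr0 : 0 ≤ r := norm_nonneg _
    set φ : ℝ := Complex.arg (conj (ρ 0 1)) with hφ
    have hkey : (r : ℂ) * Complex.exp (↑φ * Complex.I) = conj (ρ 0 1) := by
      have h := Complex.norm_mul_exp_arg_mul_I (conj (ρ 0 1))
      rwa [Complex.norm_conj] at h
    have hc : ρ 0 1 = (r : ℂ) * conj (Complex.exp (↑φ * Complex.I)) := by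
      have h := congrArg conj hkey
      rw [map_mul, Complex.conj_conj, Complex.conj_ofReal] at h
      exact h.symm
    -- the three points
    set x₀ : Matrix (Fin 2) (Fin 2) ℂ := Matrix.of fun i j => e₀ i * conj (e₀ j) with hx₀
    set x₁ : Matrix (Fin 2) (Fin 2) ℂ := Matrix.of fun i j => e₁ i * conj (e₁ j) with hx₁
    set x₂ : Matrix (Fin 2) (Fin 2) ℂ := Matrix.of fun i j => v φ i * conj (v φ j) with hx₂
    have hx₀C : x₀ ∈ C := by rw [hC]; left; left; exact hx₀
    have hx₁C : x₁ ∈ C := by rw [hC]; left; right; exact hx₁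
    have hx₂C : x₂ ∈ C := by rw [hC]; right; exact ⟨φ, hx₂⟩
    set w : Fin 3 → ℝ := ![p - r, q - r, 2 * r] with hw
    set z : Fin 3 → Matrix (Fin 2) (Fin 2) ℂ := ![x₀, x₁, x₂] with hz
    have hwsum : ∑ i : Fin 3, w i = 1 := by
      rw [Fin.sum_univ_three]
      simp only [hw, Matrix.cons_val_zero, Matrix.cons_val_one, Matrix.head_cons,
        Matrix.cons_val_two, Matrix.tail_cons]
      linarith
    have hρeq : ρ = (p - r) • x₀ + (q - r) • x₁ + (2 * r) • x₂ := by
      ext i j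
      fin_cases i <;> fin_cases j <;>
        simp only [Fin.mk_zero, Fin.mk_one, Matrix.add_apply, Matrix.smul_apply,
          hx₀, hx₁, hx₂, Matrix.of_apply,
          he₀, he₁, Matrix.cons_val_zero, Matrix.cons_val_one, Matrix.head_cons,
          Complex.real_smul, Complex.ofReal_sub, Complex.ofReal_mul, Complex.ofReal_ofNat,
          map_zero, map_one, c00 φ, c11 φ, c01 φ, c10 φ]
      · rw [h00]; ring
      · rw [hc]; ring
      · rw [h10, ← hkey]; ring
      · rw [h11]; ring
    have hmem := Finset.centerMass_mem_convexHull (Finset.univ : Finset (Fin 3))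
      (w := w) (fun i _ => by
        fin_cases i <;> simp only [hw] <;> simp <;> linarith)
      (by rw [hwsum]; norm_num)
      (z := z) (fun i _ => by
        fin_cases i
        · exact hx₀C
        · exact hx₁C
        · exact hx₂C)
    rw [Finset.centerMass_eq_of_sum_1 _ _ hwsum] at hmem
    have hsum : ∑ i : Fin 3, w i • z i = ρ := by
      rw [Fin.sum_univ_three, hρeq]
      simp only [hw, hz, Matrix.cons_val_zero, Matrix.cons_val_one, Matrix.head_cons,
        Matrix.cons_val_two, Matrix.tail_cons]
    rwa [hsum] at hmem
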